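/- Every matrix in SL_2(ℝ) can be written uniquely as a product K·A·N where K is a rotation matrix [[cos s, sin s],[-sin s, cos s]], A is a diagonal matrix [[exp t, 0],[0, exp(-t)]], and N is a unipotent upper triangular matrix [[1, u],[0, 1]], for some real numbers s, t, u. -/

import Mathlib

noncomputable def rotMat (s : ℝ) : Matrix (Fin 2) (Fin 2) ℝ :=
  !![Real.cos s, Real.sin s; -Real.sin s, Real.cos s]

noncomputable def diagMat (t : ℝ) : Matrix (Fin 2) (Fin 2) ℝ :=
  !![Real.exp t, 0; 0, Real.exp (-t)]

def unipMat (u : ℝ) : Matrix (Fin 2) (Fin 2) ℝ :=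
  !![1, u; 0, 1]

lemma kan_eq (s t u : ℝ) :
    rotMat s * diagMat t * unipMat u =
      !![Real.exp t * Real.cos s, Real.exp t * Real.cos s * u + Real.exp (-t) * Real.sin s;
        -(Real.exp t * Real.sin s), -(Real.exp t * Real.sin s) * u + Real.exp (-t) * Real.cos s] := by
  ext i j
  fin_cases i <;> fin_cases j <;>
    simp [rotMat, diagMat, unipMat, Matrix.mul_apply, Fin.sum_univ_two] <;> ring

theorem sl2_iwasawa_decomposition (g : Matrix (Fin 2) (Fin 2) ℝ) (hg : g.det = 1) :
    (∃ s t u : ℝ, g = rotMat s * diagMat t * unipMat u) ∧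
    (∀ s t u s' t' u' : ℝ,
      rotMat s * diagMat t * unipMat u = rotMat s' * diagMat t' * unipMat u' →
      t = t' ∧ u = u' ∧ rotMat s = rotMat s') := by
  constructor
  · set a := g 0 0 with ha
    set b := g 0 1 with hb
    set c := g 1 0 with hc
    set d := g 1 1 with hd
    have hdet : a * d - b * c = 1 := by rw [Matrix.det_fin_two] at hg; linarith [hg]
    have hac : a ^ 2 + c ^ 2 > 0 := by
      rcases lt_trichotomy (a ^ 2 + c ^ 2) 0 with h | h | h
      · nlinarith
      · have ha0 : a = 0 := by nlinarith
        have hc0 : c = 0 := by nlinarith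
        rw [ha0, hc0] at hdet; nlinarith
      · exact h
    set r : ℝ := Real.sqrt (a ^ 2 + c ^ 2) with hr
    have hrpos : 0 < r := Real.sqrt_pos.mpr hac
    have hrne : r ≠ 0 := hrpos.ne'
    have hr2 : r ^ 2 = a ^ 2 + c ^ 2 := Real.sq_sqrt hac.le
    set z : ℂ := ⟨a, -c⟩ with hz
    have hzne : z ≠ 0 := by
      intro h
      rw [Complex.ext_iff] at h
      simp only [Complex.zero_re, Complex.zero_im] at h
      nlinarith [h.1, h.2]
    have habs : ‖z‖ = r := by
      rw [Complex.norm_def, Complex.normSq_mk]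
      congr 1; ring
    set s := Complex.arg z with hs
    have hcos : Real.cos s = a / r := by
      rw [hs, Complex.cos_arg hzne, habs]
    have hsin : Real.sin s = -c / r := by
      rw [hs, Complex.sin_arg, habs]
    set t := Real.log r with ht
    have hexp : Real.exp t = r := Real.exp_log hrpos
    have hexpn : Real.exp (-t) = r⁻¹ := by rw [Real.exp_neg, hexp]
    refine ⟨s, t, (a * b + c * d) / r ^ 2, ?_⟩
    rw [kan_eq, hexp, hexpn, hcos, hsin, Matrix.eta_fin_two g, ← ha, ← hb, ← hc, ← hd]
    ext i j
    fin_cases i <;> fin_cases j <;>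
      simp only [Matrix.cons_val', Matrix.cons_val_zero, Matrix.cons_val_one, Matrix.head_cons,
        Matrix.empty_val', Matrix.cons_val_fin_one, Matrix.head_fin_const, Matrix.of_apply,
        Fin.mk_zero, Fin.mk_one]
    · field_simp
    · field_simp
      linear_combination b * hr2 - c * hdet
    · field_simp
    · field_simp
      linear_combination d * hr2 + a * hdet
  · intro s t u s' t' u' h
    rw [kan_eq, kan_eq] at h
    have h00 : Real.exp t * Real.cos s = Real.exp t' * Real.cos s' := by
      have := congrFun (congrFun h 0) 0; simpa using this
    have h01 : Real.exp t * Real.cos s * u + Real.exp (-t) * Real.sin s =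
        Real.exp t' * Real.cos s' * u' + Real.exp (-t') * Real.sin s' := by
      have := congrFun (congrFun h 0) 1; simpa using this
    have h10 : Real.exp t * Real.sin s = Real.exp t' * Real.sin s' := by
      have := congrFun (congrFun h 1) 0
      simp only [Matrix.cons_val', Matrix.cons_val_zero, Matrix.cons_val_one, Matrix.head_cons,
        Matrix.empty_val', Matrix.cons_val_fin_one, Matrix.head_fin_const, Matrix.of_apply] at this
      linarith [this]
    have h11 : -(Real.exp t * Real.sin s) * u + Real.exp (-t) * Real.cos s =
        -(Real.exp t' * Real.sin s') * u' + Real.exp (-t') * Real.cos s' := by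
      have := congrFun (congrFun h 1) 1; simpa using this
    have hsc := Real.sin_sq_add_cos_sq s
    have hsc' := Real.sin_sq_add_cos_sq s'
    have hexp2 : Real.exp t ^ 2 = Real.exp t' ^ 2 := by
      linear_combination (Real.exp t * Real.cos s + Real.exp t' * Real.cos s') * h00 +
        (Real.exp t * Real.sin s + Real.exp t' * Real.sin s') * h10 -
        Real.exp t ^ 2 * hsc + Real.exp t' ^ 2 * hsc'
    have het : t = t' := by
      have p1 := Real.exp_pos t
      have p2 := Real.exp_pos t'
      have h1 : Real.exp t = Real.exp t' := by nlinarith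
      exact Real.exp_injective h1
    subst het
    have hene := Real.exp_ne_zero t
    have hcos : Real.cos s = Real.cos s' := mul_left_cancel₀ hene h00
    have hsin : Real.sin s = Real.sin s' := mul_left_cancel₀ hene h10
    have huu : u = u' := by
      have h1 : Real.exp t * Real.cos s * (u - u') = 0 := by
        rw [hcos] at h01 ⊢; rw [hsin] at h01; linarith
      have h2 : Real.exp t * Real.sin s * (u - u') = 0 := by
        rw [hsin] at h11 ⊢; rw [hcos] at h11; linarith
      have h3 : Real.exp t * (u - u') = 0 := by
        linear_combination Real.cos s * h1 + Real.sin s * h2 - Real.exp t * (u - u') * hsc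
      rcases mul_eq_zero.mp h3 with h | h
      · exact absurd h hene
      · linarith
    exact ⟨rfl, huu, by rw [rotMat, rotMat, hcos, hsin]⟩
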